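/- Let A be a ring with an involution *, and let x, y ∈ A satisfy x*x = y*y = 1 and xx* + yy* = 1. Define Q ∈ M₃(A) as the matrix with rows (x, y, 0), (0, 0, x*), (0, 0, y*). Then Q is invertible with inverse Q* (the conjugate transpose), and for all b, b' ∈ A, conjugating the matrix diag(x b x* + y b' y*, 0, 0) by Q* yields diag(b, b', 0); that is, Q* · diag(b ⊞ b', 0, 0) · Q = diag(b, b', 0), where b ⊞ b' = x b x* + y b' y*. -/

import Mathlib

open Matrix

lemma diag_three_aux {A : Type*} [Ring A] (a b c : A) :
    Matrix.diagonal ![a, b, c] = !![a, 0, 0; 0, b, 0; 0, 0, c] := by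
  rw [eta_fin_three (Matrix.diagonal _)]
  simp [Matrix.diagonal_apply]

lemma conjT_three_aux {A : Type*} [Ring A] [StarRing A] (x y : A) :
    (!![x, y, 0; 0, 0, star x; 0, 0, star y] : Matrix (Fin 3) (Fin 3) A)ᴴ =
    !![star x, 0, 0; star y, 0, 0; 0, x, y] := by
  rw [eta_fin_three (_ᴴ)]
  simp [Matrix.vecHead, Matrix.vecTail]

set_option maxHeartbeats 1000000 in
/-- Wagoner's matrix `Q` built from a sum *-ring structure is invertible with inverse
its conjugate transpose, and conjugation by `Qᴴ` turns `diag(b ⊞ b', 0, 0)` into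
`diag(b, b', 0)`. -/
theorem stmt_2 {A : Type*} [Ring A] [StarRing A]
    (x y : A) (hxx : star x * x = 1) (hyy : star y * y = 1)
    (hsum : x * star x + y * star y = 1)
    (Q : Matrix (Fin 3) (Fin 3) A)
    (hQ : Q = !![x, y, 0; 0, 0, star x; 0, 0, star y]) :
    Q * Qᴴ = 1 ∧ Qᴴ * Q = 1 ∧
      ∀ b b' : A,
        Qᴴ * Matrix.diagonal ![x * b * star x + y * b' * star y, 0, 0] * Q =
          Matrix.diagonal ![b, b', 0] := by
  have e1 : star x * y = 0 := by
    have h : star x * ((x * star x + y * star y) * y) = star x * (1 * y) := by rw [hsum]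
    rw [add_mul, mul_add, one_mul, mul_assoc x (star x) y, ← mul_assoc (star x) x _, hxx,
      one_mul, mul_assoc y (star y) y, hyy, mul_one] at h
    exact left_eq_add.mp h.symm
  have e2 : star y * x = 0 := by
    have := congrArg star e1
    simpa [StarMul.star_mul] using this
  subst hQ
  rw [conjT_three_aux]
  refine ⟨?_, ?_, fun b b' => ?_⟩
  · rw [Matrix.mul_fin_three, Matrix.one_fin_three]
    simp [hxx, hyy, hsum, e1, e2]
  · rw [Matrix.mul_fin_three, Matrix.one_fin_three]
    simp [hxx, hyy, hsum, e1, e2]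
  · rw [diag_three_aux, diag_three_aux, Matrix.mul_fin_three, Matrix.mul_fin_three]
    simp [mul_add, add_mul, mul_assoc, hxx, hyy, e1, e2,
      ← mul_assoc (star x) x, ← mul_assoc (star x) y, ← mul_assoc (star y) x,
      ← mul_assoc (star y) y]
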